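/- If p is a permutation in which the entry 2 appears before the entry 1 (i.e., p^{-1}(2) < p^{-1}(1)), then there exists a block move that decreases the number of bad pairs of p by at least two. -/

import Mathlib

/-- Number of descents of a list (one-line notation). -/
def desNum (p : List ℕ) : ℕ :=
  ((Finset.range (p.length - 1)).filter (fun i => p.getD (i+1) 0 < p.getD i 0)).card

/-- The extension of `p` by a leading `0` and trailing `n+1`. -/
def extList (p : List ℕ) : List ℕ := 0 :: (p ++ [p.length + 1])

/-- Number of bad pairs of `p`. -/
def badNum (p : List ℕ) : ℕ :=
  ((Finset.range (p.length + 1)).filter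
    (fun i => (extList p).getD i 0 + 1 ≠ (extList p).getD (i+1) 0)).card

/-- `q` is obtained from `p` by one block move: interchanging two disjoint
nonempty blocks of consecutive entries. -/
def IsBlockMove (p q : List ℕ) : Prop :=
  ∃ A X B Y C : List ℕ, X ≠ [] ∧ Y ≠ [] ∧
    p = A ++ X ++ B ++ Y ++ C ∧ q = A ++ Y ++ B ++ X ++ C

/-- `p` is a permutation of `{1,…,n}` in one-line notation. -/
def IsPermList (p : List ℕ) : Prop := p.Perm (List.range' 1 p.length)

/-- `p` can be sorted to the identity `1 2 … n` using at most `k` block moves. -/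
def SortableIn (p : List ℕ) (k : ℕ) : Prop :=
  ∃ m ≤ k, ∃ f : ℕ → List ℕ, f 0 = p ∧ f m = List.range' 1 p.length ∧
    ∀ i < m, IsBlockMove (f i) (f (i+1))

/-! ### Auxiliary machinery: a recursive count of bad adjacent pairs -/

/-- Indicator of a bad pair `(a, b)`. -/
def cbf (a b : ℕ) : ℕ := if a + 1 ≠ b then 1 else 0

/-- Recursive count of bad adjacent pairs of a list. -/
def cb : List ℕ → ℕ
  | a :: b :: t => cbf a b + cb (b :: t)
  | _ => 0

lemma cbf_le (a b : ℕ) : cbf a b ≤ 1 := by unfold cbf; split <;> omega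

lemma cbf_eq_one (a b : ℕ) (h : a + 1 ≠ b) : cbf a b = 1 := by
  unfold cbf; rw [if_pos h]

lemma cb_cons_cons (a b : ℕ) (t : List ℕ) : cb (a :: b :: t) = cbf a b + cb (b :: t) := rfl

lemma cb_split (x y : ℕ) (l m : List ℕ) :
    cb (x :: (l ++ y :: m)) = cb (x :: l) + cbf (l.getLastD x) y + cb (y :: m) := by
  induction l generalizing x with
  | nil => simp [cb_cons_cons, cb]
  | cons z l ih =>
      rw [List.cons_append, cb_cons_cons, ih, List.getLastD_cons, cb_cons_cons]
      omega

lemma sum_eq_cb (l : List ℕ) :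
    ∑ i ∈ Finset.range (l.length - 1),
      (if l.getD i 0 + 1 ≠ l.getD (i+1) 0 then 1 else 0) = cb l := by
  induction l with
  | nil => simp [cb]
  | cons a t ih =>
      cases t with
      | nil => simp [cb]
      | cons b t' =>
          have hlen : (a :: b :: t').length - 1 = t'.length + 1 := by simp
          rw [hlen, Finset.sum_range_succ']
          have e1 : ∀ i : ℕ, ((a :: b :: t').getD (i+1) 0) = (b :: t').getD i 0 := fun _ => rfl
          have e2 : ∀ i : ℕ, ((a :: b :: t').getD (i+1+1) 0) = (b :: t').getD (i+1) 0 :=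
            fun _ => rfl
          simp only [e2, e1]
          have hl2 : t'.length = (b :: t').length - 1 := by simp
          rw [hl2, ih, cb_cons_cons]
          have : (b :: t').getD 0 0 = b := rfl
          simp only [List.getD_cons_zero, this, cbf]
          rw [Nat.add_comm]

lemma badNum_eq_cb (p : List ℕ) : badNum p = cb (extList p) := by
  rw [badNum, Finset.card_filter]
  have hlen : p.length + 1 = (extList p).length - 1 := by simp [extList]
  rw [hlen, sum_eq_cb]

/-- If `2` precedes `1` in `p`, there is a block move decreasing the number
of bad pairs by at least two. -/
theorem two_before_one (p : List ℕ) (hp : IsPermList p) (hn : 2 ≤ p.length)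
    (h : p.idxOf 2 < p.idxOf 1) :
    ∃ q, IsBlockMove p q ∧ badNum q + 2 ≤ badNum p := by
  have hnd : p.Nodup := hp.nodup_iff.mpr List.nodup_range'
  have hpos : ∀ a ∈ p, 1 ≤ a := by
    intro a ha
    have := hp.mem_iff.mp ha
    exact (List.mem_range'_1.mp this).1
  have h2 : 2 ∈ p := hp.mem_iff.mpr (List.mem_range'_1.mpr ⟨by norm_num, by omega⟩)
  have h1 : 1 ∈ p := hp.mem_iff.mpr (List.mem_range'_1.mpr ⟨le_refl 1, by omega⟩)
  obtain ⟨P, R, hPR⟩ := List.append_of_mem h2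
  -- 2 is not in P (nodup)
  have hnd' : (P ++ 2 :: R).Nodup := hPR ▸ hnd
  have h2P : 2 ∉ P := by
    intro hm
    exact (List.disjoint_of_nodup_append hnd') hm (by simp)
  -- 1 is in R, since otherwise indexOf 1 < indexOf 2
  have h1R : 1 ∈ R := by
    have h1' : 1 ∈ P ++ 2 :: R := hPR ▸ h1
    rcases List.mem_append.mp h1' with h1P | h1cR
    · exfalso
      have hi2 : p.idxOf 2 = P.length := by
        rw [hPR, List.idxOf_append_of_notMem h2P]
        simp
      have hi1 : p.idxOf 1 < P.length := by
        rw [hPR, List.idxOf_append_of_mem h1P]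
        exact List.idxOf_lt_length_iff.mpr h1P
      omega
    · rcases List.mem_cons.mp h1cR with h12 | h1R
      · omega
      · exact h1R
  obtain ⟨M, C, hMC⟩ := List.append_of_mem h1R
  have hp_eq : p = P ++ 2 :: (M ++ 1 :: C) := by rw [hPR, hMC]
  -- useful nodup facts
  have hndp : (P ++ 2 :: (M ++ 1 :: C)).Nodup := hp_eq ▸ hnd
  have h1P : 1 ∉ P := by
    intro hm
    exact (List.disjoint_of_nodup_append hndp) hm (by simp)
  have h2C : 2 ∉ C := by
    have := (List.nodup_cons.mp (hndp.of_append_right)).1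
    intro hm; exact this (by simp [hm])
  have hposM : ∀ a ∈ M, 1 ≤ a := by
    intro a ha
    exact hpos a (by rw [hp_eq]; simp [ha])
  -- the sentinel value
  set s : ℕ := p.length + 1 with hs
  obtain ⟨c, C', hD⟩ : ∃ c C', C ++ [s] = c :: C' := by
    cases C <;> exact ⟨_, _, rfl⟩
  have hcC : c ∈ C ++ [s] := by rw [hD]; exact List.mem_cons_self
  have hc2 : c ≠ 2 := by
    rcases List.mem_append.mp hcC with hcC | hcs
    · intro hc; exact h2C (hc ▸ hcC)
    · have : c = s := by simpa using hcs
      omega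
  -- bad-pair fact at the junction (getLastD M 2, 1)
  have hM1 : cbf (M.getLastD 2) 1 = 1 := by
    apply cbf_eq_one
    have hmem : M.getLastD 2 ∈ 2 :: M := List.getLastD_mem_cons (l := M) (a := 2)
    rcases List.mem_cons.mp hmem with he | hm
    · omega
    · have := hposM _ hm; omega
  have h1c : cbf 1 c = 1 := cbf_eq_one 1 c (by omega)
  rcases P with _ | ⟨x, P'⟩
  · -- Case P = [] : p = 2 :: (M ++ 1 :: C), q = 1 :: 2 :: M ++ C
    refine ⟨1 :: 2 :: (M ++ C), ⟨[], 2 :: M, [], [1], C, by simp, by simp, ?_, ?_⟩, ?_⟩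
    · rw [hp_eq]; simp
    · simp
    · -- the bad-pair count
      have hqlen : (1 :: 2 :: (M ++ C)).length = p.length := by
        rw [hp_eq]; simp; omega
      rw [badNum_eq_cb, badNum_eq_cb]
      have hEp : extList p = 0 :: ((2 :: M) ++ 1 :: (c :: C')) := by
        rw [extList, ← hs, hp_eq]
        simp [hD]
      have hEq : extList (1 :: 2 :: (M ++ C)) = 0 :: ((1 :: 2 :: M) ++ c :: C') := by
        rw [extList, hqlen, ← hs]
        simp [hD]
      rw [hEp, hEq, cb_split 0 1 (2 :: M) (c :: C'), cb_split 0 c (1 :: 2 :: M) C']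
      try simp only [List.getLastD_cons]
      have a1 : cb (0 :: 2 :: M) = cbf 0 2 + cb (2 :: M) := rfl
      have a2 : cb (1 :: c :: C') = cbf 1 c + cb (c :: C') := rfl
      have a3 : cb (0 :: 1 :: 2 :: M) = cbf 0 1 + (cbf 1 2 + cb (2 :: M)) := rfl
      have h02 : cbf 0 2 = 1 := cbf_eq_one 0 2 (by omega)
      have h01 : cbf 0 1 = 0 := by simp [cbf]
      have h12 : cbf 1 2 = 0 := by simp [cbf]
      have hb := cbf_le (M.getLastD 2) c
      omega
  · -- Case P = x :: P' : q = 1 :: 2 :: M ++ (x :: P') ++ C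
    refine ⟨1 :: (2 :: M ++ (x :: P') ++ C),
      ⟨[], x :: P', 2 :: M, [1], C, by simp, by simp, ?_, ?_⟩, ?_⟩
    · rw [hp_eq]; simp
    · simp
    · have hqlen : (1 :: (2 :: M ++ (x :: P') ++ C)).length = p.length := by
        rw [hp_eq]; simp; omega
      rw [badNum_eq_cb, badNum_eq_cb]
      have hEp : extList p = 0 :: ((x :: P') ++ 2 :: (M ++ 1 :: (c :: C'))) := by
        rw [extList, ← hs, hp_eq]
        simp [hD]
      have hEq : extList (1 :: (2 :: M ++ (x :: P') ++ C)) =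
          0 :: ((1 :: 2 :: M) ++ x :: (P' ++ c :: C')) := by
        rw [extList, hqlen, ← hs]
        simp [hD]
      rw [hEp, hEq, cb_split 0 2 (x :: P') (M ++ 1 :: (c :: C')),
        cb_split 0 x (1 :: 2 :: M) (P' ++ c :: C'),
        cb_split 2 1 M (c :: C'), cb_split x c P' C']
      try simp only [List.getLastD_cons]
      have a1 : cb (0 :: x :: P') = cbf 0 x + cb (x :: P') := rfl
      have a2 : cb (1 :: c :: C') = cbf 1 c + cb (c :: C') := rfl
      have a3 : cb (0 :: 1 :: 2 :: M) = cbf 0 1 + (cbf 1 2 + cb (2 :: M)) := rfl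
      -- bad-pair facts
      have hx1 : x ≠ 1 := fun hx => h1P (by simp [hx])
      have h0x : cbf 0 x = 1 := cbf_eq_one 0 x (by omega)
      have hP2 : cbf (P'.getLastD x) 2 = 1 := by
        apply cbf_eq_one
        have hmem : P'.getLastD x ∈ x :: P' := List.getLastD_mem_cons (l := P') (a := x)
        intro hcontra
        have : P'.getLastD x = 1 := by omega
        exact h1P (this ▸ hmem)
      have h01 : cbf 0 1 = 0 := by simp [cbf]
      have h12 : cbf 1 2 = 0 := by simp [cbf]
      have hb1 := cbf_le (M.getLastD 2) x
      have hb2 := cbf_le (P'.getLastD x) c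
      omega
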